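/- Let p be a prime, r a nonnegative integer with base-p digits r = Σ_{i=0}^{j} r_i p^i, and suppose there are distinct indices i₁, i₂ ∈ [0, j] and integers κ', κ'' ∈ [0, p−1] with C(κ', r_{i₁}) · C(κ'', r_{i₂}) ≡ −1 (mod p). Then for every positive integer k with k ≡ r + (κ' − r_{i₁}) p^{i₁} + (κ'' − r_{i₂}) p^{i₂} (mod p^{j+1}), we have C(k, r) ≡ −1 (mod p). -/

import Mathlib

open Nat

private lemma addBound9 {u v a b : ℕ} (ha : a < u) (hb : b < v) : a + u * b < u * v := by
  have h1 : a + u * b < u * (b + 1) := by rw [Nat.mul_succ]; omega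
  exact h1.trans_le (Nat.mul_le_mul_left u hb)

private lemma digitExt9 (p i n : ℕ) : n / p ^ i % p = n % p ^ (i + 1) / p ^ i := by
  rw [← Nat.mod_mul_right_div_self, pow_succ]

private lemma divAux9 {a n : ℕ} (b : ℕ) (h : a < n) : (a + n * b) / n = b := by
  rw [Nat.add_mul_div_left _ _ (lt_of_le_of_lt (Nat.zero_le a) h),
    Nat.div_eq_of_lt h, zero_add]

private lemma modAux9 (a b : ℕ) {n q : ℕ} (h : q ∣ n) : (a + n * b) % q = a % q := by
  obtain ⟨c, rfl⟩ := h
  rw [mul_assoc]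
  exact Nat.add_mul_mod_self_left a q (c * b)

private lemma aux (p : ℕ) (hp : p.Prime) (r j : ℕ) (hj : r < p ^ (j + 1))
    (i₁ i₂ : ℕ) (hi₂ : i₂ ≤ j) (hlt : i₁ < i₂)
    (κ' κ'' : ℕ) (hκ' : κ' < p) (hκ'' : κ'' < p) (k : ℕ)
    (hk : (k : ℤ) ≡ (r : ℤ) + ((κ' : ℤ) - (r / p ^ i₁ % p : ℕ)) * (p : ℤ) ^ i₁
        + ((κ'' : ℤ) - (r / p ^ i₂ % p : ℕ)) * (p : ℤ) ^ i₂
        [ZMOD (p : ℤ) ^ (j + 1)]) :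
    (Nat.choose k r : ZMod p) =
      (Nat.choose κ' (r / p ^ i₁ % p) : ZMod p) *
      (Nat.choose κ'' (r / p ^ i₂ % p) : ZMod p) := by
  haveI : Fact p.Prime := ⟨hp⟩
  have hpp : 0 < p := hp.pos
  obtain ⟨m, hi₂eq⟩ : ∃ m, i₂ = i₁ + 1 + m := ⟨i₂ - i₁ - 1, by omega⟩
  set A := r % p ^ i₁ with hA_def
  set d1 := r / p ^ i₁ % p with hd1_def
  set B := r / p ^ (i₁ + 1) % p ^ m with hB_def
  set d2 := r / p ^ i₂ % p with hd2_def
  set C := r / p ^ (i₂ + 1) with hC_def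
  have hA : A < p ^ i₁ := Nat.mod_lt _ (pow_pos hpp _)
  have hd1 : d1 < p := Nat.mod_lt _ hpp
  have hB : B < p ^ m := Nat.mod_lt _ (pow_pos hpp _)
  have hd2 : d2 < p := Nat.mod_lt _ hpp
  have hC : C < p ^ (j - i₂) := by
    rw [hC_def, Nat.div_lt_iff_lt_mul (pow_pos hpp _)]
    calc r < p ^ (j + 1) := hj
      _ = p ^ (j - i₂) * p ^ (i₂ + 1) := by
        rw [← pow_add]; exact congrArg (p ^ ·) (by omega)
  have hpow2 : p ^ i₂ = p ^ (i₁ + 1) * p ^ m := by rw [hi₂eq, pow_add]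
  have hpow1 : p ^ (i₁ + 1) = p ^ i₁ * p := pow_succ p i₁
  -- decomposition of r
  have h2 : r / p ^ i₁ = d1 + p * (r / p ^ (i₁ + 1)) := by
    rw [hd1_def, pow_succ, ← Nat.div_div_eq_div_mul]
    exact (Nat.mod_add_div _ _).symm
  have h3 : r / p ^ (i₁ + 1) = B + p ^ m * (r / p ^ i₂) := by
    have hdd : r / p ^ (i₁ + 1) / p ^ m = r / p ^ i₂ := by
      rw [Nat.div_div_eq_div_mul, ← pow_add, ← hi₂eq]
    rw [hB_def, ← hdd]
    exact (Nat.mod_add_div _ _).symm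
  have h4 : r / p ^ i₂ = d2 + p * C := by
    rw [hd2_def, hC_def, pow_succ, ← Nat.div_div_eq_div_mul]
    exact (Nat.mod_add_div _ _).symm
  have hr_dec : r = A + p ^ i₁ * (d1 + p * (B + p ^ m * (d2 + p * C))) := by
    conv_lhs => rw [← Nat.mod_add_div r (p ^ i₁), h2, h3, h4]
  set t := A + p ^ i₁ * (κ' + p * (B + p ^ m * (κ'' + p * C))) with ht_def
  have ht_lt : t < p ^ (j + 1) := by
    have b1 : κ'' + p * C < p * p ^ (j - i₂) := addBound9 hκ'' hC
    have b2 : B + p ^ m * (κ'' + p * C) < p ^ m * (p * p ^ (j - i₂)) := addBound9 hB b1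
    have b3 : κ' + p * (B + p ^ m * (κ'' + p * C)) < p * (p ^ m * (p * p ^ (j - i₂))) :=
      addBound9 hκ' b2
    have b4 := addBound9 hA b3
    calc t < p ^ i₁ * (p * (p ^ m * (p * p ^ (j - i₂)))) := b4
      _ = p ^ (j + 1) := by
        rw [show j + 1 = i₁ + (1 + (m + (1 + (j - i₂)))) by omega,
          pow_add, pow_add, pow_add, pow_add, pow_one]
  have hcast : (t : ℤ) = (r : ℤ) + ((κ' : ℤ) - (d1 : ℕ)) * (p : ℤ) ^ i₁
      + ((κ'' : ℤ) - (d2 : ℕ)) * (p : ℤ) ^ i₂ := by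
    have hr' : (r : ℤ) = (A : ℤ) + (p : ℤ) ^ i₁ * (d1 + p * (B + p ^ m * (d2 + p * C))) := by
      exact_mod_cast congrArg (Nat.cast : ℕ → ℤ) hr_dec
    have hp2 : (p : ℤ) ^ i₂ = (p : ℤ) ^ i₁ * p * p ^ m := by
      rw [hi₂eq]; ring
    rw [ht_def, hr', hp2]
    push_cast
    ring
  -- k % p^(j+1) = t
  have hkt : k % p ^ (j + 1) = t := by
    have h1 : (k : ℤ) ≡ (t : ℤ) [ZMOD ((p ^ (j + 1) : ℕ) : ℤ)] := by
      rw [hcast]; push_cast; exact_mod_cast hk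
    have h2 : k ≡ t [MOD p ^ (j + 1)] := by
      rwa [Int.natCast_modEq_iff] at h1
    rw [h2, Nat.mod_eq_of_lt ht_lt]
  have hdig : ∀ i, i ≤ j → k / p ^ i % p = t / p ^ i % p := by
    intro i hi
    rw [digitExt9, digitExt9, ← Nat.mod_mod_of_dvd k (pow_dvd_pow p (by omega : i + 1 ≤ j + 1)),
      hkt]
  -- digits of t
  have Dt1 : t / p ^ i₁ % p = κ' := by
    rw [ht_def, divAux9 _ hA, Nat.add_mul_mod_self_left, Nat.mod_eq_of_lt hκ']
  have ht_dec2 : t = (A + p ^ i₁ * κ' + p ^ (i₁ + 1) * B) + p ^ i₂ * (κ'' + p * C) := by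
    rw [ht_def, hpow2, hpow1]; ring
  have hP2 : A + p ^ i₁ * κ' + p ^ (i₁ + 1) * B < p ^ i₂ := by
    have b1 : A + p ^ i₁ * κ' < p ^ (i₁ + 1) := by rw [hpow1]; exact addBound9 hA hκ'
    have b2 := addBound9 b1 hB
    rwa [← hpow2] at b2
  have Dt2 : t / p ^ i₂ % p = κ'' := by
    rw [ht_dec2, divAux9 _ hP2, Nat.add_mul_mod_self_left, Nat.mod_eq_of_lt hκ'']
  have Dt3 : ∀ i, i ≤ j → i ≠ i₁ → i ≠ i₂ → t / p ^ i % p = r / p ^ i % p := by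
    intro i hi h1 h2
    rcases lt_or_gt_of_ne h1 with hlt1 | hgt1
    · -- i < i₁
      have hdvd : p ^ (i + 1) ∣ p ^ i₁ := pow_dvd_pow p (by omega)
      rw [digitExt9, digitExt9, ht_def, modAux9 _ _ hdvd]
      conv_rhs => rw [hr_dec, modAux9 _ _ hdvd]
    rcases lt_or_gt_of_ne h2 with hlt2 | hgt2
    · -- i₁ < i < i₂
      have ht' : t = (A + p ^ i₁ * κ') + p ^ (i₁ + 1) * (B + p ^ m * (κ'' + p * C)) := by
        rw [ht_def, hpow1]; ring
      have hr' : r = (A + p ^ i₁ * d1) + p ^ (i₁ + 1) * (B + p ^ m * (d2 + p * C)) := by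
        rw [hr_dec, hpow1]; ring
      have bt : A + p ^ i₁ * κ' < p ^ (i₁ + 1) := by rw [hpow1]; exact addBound9 hA hκ'
      have br : A + p ^ i₁ * d1 < p ^ (i₁ + 1) := by rw [hpow1]; exact addBound9 hA hd1
      have hsplit : ∀ n : ℕ, n / p ^ i = n / p ^ (i₁ + 1) / p ^ (i - i₁ - 1) := by
        intro n
        rw [Nat.div_div_eq_div_mul, ← pow_add]
        exact congrArg (fun e => n / p ^ e) (by omega)
      have hdvd : p ^ (i - i₁ - 1 + 1) ∣ p ^ m := pow_dvd_pow p (by omega)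
      rw [hsplit t, hsplit r, ht', hr', divAux9 _ bt, divAux9 _ br,
        digitExt9, digitExt9, modAux9 _ _ hdvd, modAux9 _ _ hdvd]
    · -- i₂ < i
      have hpow3 : p ^ (i₂ + 1) = p ^ (i₁ + 1) * p ^ m * p := by rw [pow_succ, hpow2]
      have ht' : t = (A + p ^ i₁ * κ' + p ^ (i₁ + 1) * B + p ^ i₂ * κ'') + p ^ (i₂ + 1) * C := by
        rw [ht_def, hpow3, hpow2, hpow1]; ring
      have bt : A + p ^ i₁ * κ' + p ^ (i₁ + 1) * B + p ^ i₂ * κ'' < p ^ (i₂ + 1) := by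
        rw [pow_succ]; exact addBound9 hP2 hκ''
      have hsplit : ∀ n : ℕ, n / p ^ i = n / p ^ (i₂ + 1) / p ^ (i - i₂ - 1) := by
        intro n
        rw [Nat.div_div_eq_div_mul, ← pow_add]
        exact congrArg (fun e => n / p ^ e) (by omega)
      rw [hsplit t, hsplit r, ht', divAux9 _ bt, ← hC_def]
  -- Lucas
  have H := Choose.choose_modEq_choose_mul_prod_range_choose (n := k) (k := r) (p := p) (j + 1)
  have hr0 : r / p ^ (j + 1) = 0 := Nat.div_eq_of_lt hj
  have H2 : ((Nat.choose k r : ℤ) : ZMod p) =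
      ((Nat.choose (k / p ^ (j + 1)) (r / p ^ (j + 1)) *
        ∏ i ∈ Finset.range (j + 1), Nat.choose (k / p ^ i % p) (r / p ^ i % p) : ℤ) : ZMod p) :=
    (ZMod.intCast_eq_intCast_iff _ _ _).mpr H
  rw [hr0, Nat.choose_zero_right] at H2
  push_cast at H2
  rw [H2, one_mul]
  have hprod : ∀ i ∈ Finset.range (j + 1),
      ((Nat.choose (k / p ^ i % p) (r / p ^ i % p) : ZMod p)) =
      ((Nat.choose (t / p ^ i % p) (r / p ^ i % p) : ZMod p)) := by
    intro i hi
    rw [hdig i (by simpa using Nat.lt_succ_iff.mp (Finset.mem_range.mp hi))]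
  rw [Finset.prod_congr rfl hprod]
  set f : ℕ → ZMod p := fun i => (Nat.choose (t / p ^ i % p) (r / p ^ i % p) : ZMod p) with hf
  have hmem1 : i₁ ∈ Finset.range (j + 1) := Finset.mem_range.mpr (by omega)
  have hmem2 : i₂ ∈ (Finset.range (j + 1)).erase i₁ :=
    Finset.mem_erase.mpr ⟨by omega, Finset.mem_range.mpr (by omega)⟩
  rw [← Finset.mul_prod_erase _ f hmem1, ← Finset.mul_prod_erase _ f hmem2]
  have hrest : ∏ i ∈ ((Finset.range (j + 1)).erase i₁).erase i₂, f i = 1 := by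
    apply Finset.prod_eq_one
    intro i hi
    simp only [Finset.mem_erase, Finset.mem_range] at hi
    rw [hf]
    simp only
    rw [Dt3 i (by omega) hi.2.1 hi.1, Nat.choose_self, Nat.cast_one]
  rw [hrest, mul_one, hf]
  simp only
  rw [Dt1, Dt2]

theorem stmt_6 (p : ℕ) (hp : p.Prime) (r j : ℕ) (hj : r < p ^ (j + 1))
    (i₁ i₂ : ℕ) (hi₁ : i₁ ≤ j) (hi₂ : i₂ ≤ j) (hne : i₁ ≠ i₂)
    (κ' κ'' : ℕ) (hκ' : κ' ≤ p - 1) (hκ'' : κ'' ≤ p - 1)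
    (hchoose : (Nat.choose κ' (r / p ^ i₁ % p) : ZMod p) *
      (Nat.choose κ'' (r / p ^ i₂ % p) : ZMod p) = -1) :
    ∀ k : ℕ, 0 < k →
      (k : ℤ) ≡ (r : ℤ) + ((κ' : ℤ) - (r / p ^ i₁ % p : ℕ)) * (p : ℤ) ^ i₁
        + ((κ'' : ℤ) - (r / p ^ i₂ % p : ℕ)) * (p : ℤ) ^ i₂
        [ZMOD (p : ℤ) ^ (j + 1)] →
      (Nat.choose k r : ZMod p) = -1 := by
  intro k _ hk
  have hp2 := hp.two_le
  have hκ'lt : κ' < p := by omega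
  have hκ''lt : κ'' < p := by omega
  rcases lt_or_gt_of_ne hne with h | h
  · rw [aux p hp r j hj i₁ i₂ hi₂ h κ' κ'' hκ'lt hκ''lt k hk, hchoose]
  · have hk' : (k : ℤ) ≡ (r : ℤ) + ((κ'' : ℤ) - (r / p ^ i₂ % p : ℕ)) * (p : ℤ) ^ i₂
        + ((κ' : ℤ) - (r / p ^ i₁ % p : ℕ)) * (p : ℤ) ^ i₁
        [ZMOD (p : ℤ) ^ (j + 1)] := by
      convert hk using 1; ring
    rw [aux p hp r j hj i₂ i₁ hi₁ h κ'' κ' hκ''lt hκ'lt k hk', mul_comm, hchoose]
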